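/- Let n be a natural number. The set M = M_n(ℤ) with the operation 𝔞 * 𝔟 = [c_ij], c_ij = a_ij + (1 + 2 a_jj) b_ij, is a monoid whose identity element is the zero matrix, and the map t : M → End(G_n), 𝔞 ↦ t_𝔞, is an injective monoid homomorphism into the endomorphism monoid of G_n. -/

import Mathlib

/-- The defining relations of the combinatorial Hantzsche-Wendt group `G_n`:
`x_i⁻¹ x_j² x_i = x_j⁻²` for all `i ≠ j`, written as relators. -/
def HWrels (n : ℕ) : Set (FreeGroup (Fin n)) :=
  {r | ∃ i j : Fin n, i ≠ j ∧
    r = (FreeGroup.of i)⁻¹ * FreeGroup.of j ^ 2 * FreeGroup.of i * FreeGroup.of j ^ 2}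

/-- The combinatorial Hantzsche-Wendt group `G_n`. -/
abbrev HW (n : ℕ) : Type := PresentedGroup (HWrels n)

/-- The generators `x_1, …, x_n` of `G_n`. -/
def x (n : ℕ) (i : Fin n) : HW n := PresentedGroup.of i

/-- A type synonym for `M = M_n(ℤ)`, carrying the monoid structure given by
`𝔞 * 𝔟 = [c_ij]` with `c_ij = a_ij + (1 + 2 a_jj) b_ij`. -/
def MM (n : ℕ) : Type := Matrix (Fin n) (Fin n) ℤ

instance (n : ℕ) : Mul (MM n) :=
  ⟨fun 𝔞 𝔟 i j => 𝔞 i j + (1 + 2 * 𝔞 j j) * 𝔟 i j⟩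

instance (n : ℕ) : One (MM n) := ⟨fun _ _ => (0 : ℤ)⟩

theorem MM.mul_apply {n : ℕ} (𝔞 𝔟 : MM n) (i j : Fin n) :
    (𝔞 * 𝔟) i j = 𝔞 i j + (1 + 2 * 𝔞 j j) * 𝔟 i j := rfl

theorem MM.one_apply {n : ℕ} (i j : Fin n) : (1 : MM n) i j = 0 := rfl

theorem MM.ext {n : ℕ} {𝔞 𝔟 : MM n} (h : ∀ i j, 𝔞 i j = 𝔟 i j) : 𝔞 = 𝔟 :=
  funext fun i => funext fun j => h i j

instance (n : ℕ) : Monoid (MM n) where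
  mul_assoc a b c := MM.ext fun i j => by
    simp only [MM.mul_apply]; ring
  one_mul a := MM.ext fun i j => by simp only [MM.mul_apply, MM.one_apply]; ring
  mul_one a := MM.ext fun i j => by simp only [MM.mul_apply, MM.one_apply]; ring

/-- For an `n × n` integer matrix `𝔞 = [a_ij]`, the element
`a_i = (x_1²)^{a_i1} ⋯ (x_n²)^{a_in}` of `A_n ≤ G_n`. -/
def aElt (n : ℕ) (𝔞 : MM n) (i : Fin n) : HW n :=
  ((List.finRange n).map fun j => (x n j ^ 2) ^ 𝔞 i j).prod

namespace HWaux

variable {n : ℕ}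

lemma hw_rel {i j : Fin n} (h : i ≠ j) :
    (x n i)⁻¹ * x n j ^ 2 * x n i * x n j ^ 2 = 1 := by
  have hr : ((FreeGroup.of i)⁻¹ * FreeGroup.of j ^ 2 * FreeGroup.of i * FreeGroup.of j ^ 2)
      ∈ Subgroup.normalClosure (HWrels n) :=
    Subgroup.subset_normalClosure ⟨i, j, h, rfl⟩
  have h1 : PresentedGroup.mk (HWrels n)
      ((FreeGroup.of i)⁻¹ * FreeGroup.of j ^ 2 * FreeGroup.of i * FreeGroup.of j ^ 2) = 1 :=
    (QuotientGroup.eq_one_iff _).mpr hr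
  simpa [x, PresentedGroup.of, map_mul, map_pow, map_inv] using h1

lemma hw_conj {i j : Fin n} (h : i ≠ j) :
    (x n i)⁻¹ * x n j ^ 2 * x n i = (x n j ^ 2)⁻¹ := by
  exact eq_inv_of_mul_eq_one_left (hw_rel h)

lemma sq_comm (j k : Fin n) : Commute (x n j ^ 2) (x n k ^ 2) := by
  rcases eq_or_ne j k with rfl | h
  · exact Commute.refl _
  set a := x n j
  set b := x n k ^ 2
  have h1 : a⁻¹ * b * a = b⁻¹ := hw_conj h
  have h2 : b * a = a * b⁻¹ := by
    calc b * a = a * (a⁻¹ * b * a) := by group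
    _ = a * b⁻¹ := by rw [h1]
  have h3 : a * b = b⁻¹ * a := by
    calc a * b = b⁻¹ * (b * a) * b := by group
    _ = b⁻¹ * (a * b⁻¹) * b := by rw [h2]
    _ = b⁻¹ * a := by group
  show a ^ 2 * b = b * a ^ 2
  calc a ^ 2 * b = a * (a * b) := by rw [pow_two, mul_assoc]
  _ = a * (b⁻¹ * a) := by rw [h3]
  _ = (a * b⁻¹) * a := by group
  _ = (b * a) * a := by rw [← h2]
  _ = b * a ^ 2 := by rw [pow_two, mul_assoc]


def Al (n : ℕ) (e : Fin n → ℤ) (l : List (Fin n)) : HW n :=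
  (l.map fun j => (x n j ^ 2) ^ e j).prod

def A (n : ℕ) (e : Fin n → ℤ) : HW n := Al n e (List.finRange n)

lemma Al_nil (e : Fin n → ℤ) : Al n e [] = 1 := rfl

lemma Al_cons (e : Fin n → ℤ) (a : Fin n) (l : List (Fin n)) :
    Al n e (a :: l) = (x n a ^ 2) ^ e a * Al n e l := by
  simp [Al]

lemma commute_Al (j : Fin n) (c : ℤ) (e : Fin n → ℤ) (l : List (Fin n)) :
    Commute ((x n j ^ 2) ^ c) (Al n e l) := by
  apply Commute.list_prod_right
  intro y hy
  simp only [List.mem_map] at hy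
  obtain ⟨k, -, rfl⟩ := hy
  exact (sq_comm j k).zpow_zpow c (e k)

lemma Al_add (e f : Fin n → ℤ) (l : List (Fin n)) :
    Al n e l * Al n f l = Al n (e + f) l := by
  induction l with
  | nil => simp [Al_nil]
  | cons a t ih =>
    have hc := (commute_Al a (f a) e t).symm
    calc Al n e (a :: t) * Al n f (a :: t)
        = (x n a ^ 2) ^ e a * (Al n e t * (x n a ^ 2) ^ f a) * Al n f t := by
          rw [Al_cons, Al_cons]; group
      _ = (x n a ^ 2) ^ e a * ((x n a ^ 2) ^ f a * Al n e t) * Al n f t := by rw [hc.eq]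
      _ = ((x n a ^ 2) ^ e a * (x n a ^ 2) ^ f a) * (Al n e t * Al n f t) := by group
      _ = (x n a ^ 2) ^ (e a + f a) * Al n (e + f) t := by rw [zpow_add, ih]
      _ = Al n (e + f) (a :: t) := by rw [Al_cons]; rfl

lemma Al_zero (l : List (Fin n)) : Al n 0 l = 1 := by
  induction l with
  | nil => rfl
  | cons a t ih => rw [Al_cons, ih]; simp

lemma conj_Al (i : Fin n) (e : Fin n → ℤ) (l : List (Fin n)) :
    (x n i)⁻¹ * Al n e l * x n i = Al n (fun k => if i = k then e k else -e k) l := by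
  induction l with
  | nil => simp [Al_nil]
  | cons a t ih =>
    have key : (x n i)⁻¹ * (x n a ^ 2) ^ e a * x n i
        = (x n a ^ 2) ^ (if i = a then e a else -e a) := by
      have hconj : (x n i)⁻¹ * (x n a ^ 2) ^ e a * x n i
          = ((x n i)⁻¹ * x n a ^ 2 * x n i) ^ e a := by
        have := conj_zpow (i := e a) (a := (x n i)⁻¹) (b := x n a ^ 2)
        simpa using this.symm
      rcases eq_or_ne i a with rfl | h
      · rw [if_pos rfl, hconj]
        congr 1
        group
      · rw [if_neg h, hconj, hw_conj h, zpow_neg, inv_zpow]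
    calc (x n i)⁻¹ * Al n e (a :: t) * x n i
        = ((x n i)⁻¹ * (x n a ^ 2) ^ e a * x n i) * ((x n i)⁻¹ * Al n e t * x n i) := by
          rw [Al_cons]; group
      _ = (x n a ^ 2) ^ (if i = a then e a else -e a)
            * Al n (fun k => if i = k then e k else -e k) t := by rw [key, ih]
      _ = Al n (fun k => if i = k then e k else -e k) (a :: t) := by rw [Al_cons]

lemma prod_map_eq_one {M : Type*} [Monoid M] (l : List (Fin n)) (g : Fin n → M)
    (h : ∀ j ∈ l, g j = 1) : (l.map g).prod = 1 :=
  List.prod_eq_one (by simpa using h)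

lemma prod_map_single {M : Type*} [Monoid M] (l : List (Fin n)) (hl : l.Nodup)
    {k : Fin n} (hk : k ∈ l) (g : Fin n → M) (h1 : ∀ j, j ≠ k → g j = 1) :
    (l.map g).prod = g k := by
  induction l with
  | nil => simp at hk
  | cons a t ih =>
    rcases List.nodup_cons.mp hl with ⟨ha, ht⟩
    rcases eq_or_ne a k with rfl | h
    · rw [List.map_cons, List.prod_cons,
        prod_map_eq_one t g (fun j hj => h1 j (fun hjk => ha (hjk ▸ hj))), mul_one]
    · have hk' : k ∈ t := by
        rcases List.mem_cons.mp hk with h' | h'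
        · exact absurd h'.symm h
        · exact h'
      rw [List.map_cons, List.prod_cons, h1 a h, one_mul, ih ht hk']

lemma A_add (e f : Fin n → ℤ) : A n e * A n f = A n (e + f) := Al_add e f _

lemma A_zero : A n 0 = 1 := Al_zero _

lemma A_congr {e f : Fin n → ℤ} (h : ∀ k, e k = f k) : A n e = A n f := by
  rw [show e = f from funext h]

lemma A_inv (e : Fin n → ℤ) : (A n e)⁻¹ = A n (-e) := by
  apply inv_eq_of_mul_eq_one_right
  rw [A_add]
  simpa using A_zero

lemma conj_A (i : Fin n) (e : Fin n → ℤ) :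
    (x n i)⁻¹ * A n e * x n i = A n (fun k => if i = k then e k else -e k) :=
  conj_Al i e _

lemma A_single (i : Fin n) (c : ℤ) :
    A n (fun k => if k = i then c else 0) = (x n i ^ 2) ^ c := by
  have := prod_map_single (List.finRange n) (List.nodup_finRange n)
    (List.mem_finRange i) (fun j => (x n j ^ 2) ^ (if j = i then c else 0))
    (fun j hj => by simp [hj])
  simpa [A, Al] using this



lemma sq_xA (j : Fin n) (e : Fin n → ℤ) :
    (x n j * A n e) ^ 2 = A n (fun k => if k = j then 1 + 2 * e j else 0) := by
  calc (x n j * A n e) ^ 2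
      = x n j ^ 2 * (((x n j)⁻¹ * A n e * x n j) * A n e) := by rw [pow_two]; group
    _ = x n j ^ 2 * (A n (fun k => if j = k then e k else -e k) * A n e) := by rw [conj_A]
    _ = A n (fun k => if k = j then 1 else 0)
          * A n ((fun k => if j = k then e k else -e k) + e) := by
        rw [A_add, A_single, zpow_one]
    _ = A n ((fun k => if k = j then 1 else 0)
          + ((fun k => if j = k then e k else -e k) + e)) := A_add _ _
    _ = A n (fun k => if k = j then 1 + 2 * e j else 0) := A_congr (fun k => by
        rcases eq_or_ne k j with rfl | h
        · simp [Pi.add_apply]; ring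
        · simp [Pi.add_apply, h, Ne.symm h])

lemma relcheck (𝔞 : Matrix (Fin n) (Fin n) ℤ) :
    ∀ r ∈ HWrels n, FreeGroup.lift (fun i => x n i * A n (𝔞 i)) r = 1 := by
  rintro r ⟨i, j, hij, rfl⟩
  simp only [map_mul, map_pow, map_inv, FreeGroup.lift_apply_of]
  rw [sq_xA]
  calc (x n i * A n (𝔞 i))⁻¹ * A n (fun k => if k = j then 1 + 2 * 𝔞 j j else 0)
        * (x n i * A n (𝔞 i)) * A n (fun k => if k = j then 1 + 2 * 𝔞 j j else 0)
      = (A n (𝔞 i))⁻¹ * ((x n i)⁻¹ * A n (fun k => if k = j then 1 + 2 * 𝔞 j j else 0) * x n i)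
        * A n (𝔞 i) * A n (fun k => if k = j then 1 + 2 * 𝔞 j j else 0) := by group
    _ = A n (-(𝔞 i)) * A n (fun k => if i = k then (if k = j then 1 + 2 * 𝔞 j j else 0)
          else -(if k = j then 1 + 2 * 𝔞 j j else 0))
        * A n (𝔞 i) * A n (fun k => if k = j then 1 + 2 * 𝔞 j j else 0) := by
        rw [A_inv, conj_A]
    _ = A n ((-(𝔞 i)) + (fun k => if i = k then (if k = j then 1 + 2 * 𝔞 j j else 0)
          else -(if k = j then 1 + 2 * 𝔞 j j else 0)) + (𝔞 i)
          + (fun k => if k = j then 1 + 2 * 𝔞 j j else 0)) := by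
        rw [A_add, A_add, A_add]
    _ = A n 0 := A_congr (fun k => by
        rcases eq_or_ne i k with rfl | h
        · simp [hij]
        · simp only [Pi.add_apply, Pi.neg_apply, Pi.zero_apply, if_neg h]
          ring)
    _ = 1 := A_zero

def Tf (𝔞 : Matrix (Fin n) (Fin n) ℤ) : Monoid.End (HW n) :=
  (PresentedGroup.toGroup (relcheck 𝔞) : HW n →* HW n)

lemma Tf_x (𝔞 : Matrix (Fin n) (Fin n) ℤ) (i : Fin n) :
    Tf 𝔞 (x n i) = x n i * A n (𝔞 i) :=
  PresentedGroup.toGroup.of _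

lemma Tf_sq (𝔞 : Matrix (Fin n) (Fin n) ℤ) (j : Fin n) :
    Tf 𝔞 (x n j ^ 2) = (x n j ^ 2) ^ (1 + 2 * 𝔞 j j) := by
  have : Tf 𝔞 (x n j ^ 2) = (Tf 𝔞 (x n j)) ^ 2 := map_pow _ _ _
  rw [this, Tf_x, sq_xA, A_single]

lemma Tf_Al (𝔞 : Matrix (Fin n) (Fin n) ℤ) (e : Fin n → ℤ) (l : List (Fin n)) :
    Tf 𝔞 (Al n e l) = Al n (fun k => (1 + 2 * 𝔞 k k) * e k) l := by
  unfold Al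
  rw [map_list_prod, List.map_map]
  refine congrArg List.prod (List.map_congr_left fun k hk => ?_)
  show Tf 𝔞 ((x n k ^ 2) ^ e k) = (x n k ^ 2) ^ ((1 + 2 * 𝔞 k k) * e k)
  rw [map_zpow, Tf_sq, ← zpow_mul]

lemma Tf_A (𝔞 : Matrix (Fin n) (Fin n) ℤ) (e : Fin n → ℤ) :
    Tf 𝔞 (A n e) = A n (fun k => (1 + 2 * 𝔞 k k) * e k) := Tf_Al 𝔞 e _


@[simp] lemma r_inv (a : ZMod 0) : (DihedralGroup.r a)⁻¹ = DihedralGroup.r (-a) := rfl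

@[simp] lemma sr_inv (a : ZMod 0) : (DihedralGroup.sr a)⁻¹ = DihedralGroup.sr a := rfl

lemma r_pow (a : ℤ) (m : ℕ) :
    (DihedralGroup.r a : DihedralGroup 0) ^ m = DihedralGroup.r (a * (m : ℤ)) := by
  induction m with
  | zero =>
    rw [pow_zero]
    rw [show (a * ((0:ℕ) : ℤ)) = 0 by simp]
    rfl
  | succ m ih =>
    rw [pow_succ, ih]; erw [DihedralGroup.r_mul_r]
    congr 1
    show a * (m : ℤ) + a = a * ((m + 1 : ℕ) : ℤ)
    push_cast
    ring

lemma r_zpow (a t : ℤ) :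
    (DihedralGroup.r a : DihedralGroup 0) ^ t = DihedralGroup.r (a * t) := by
  cases t with
  | ofNat m =>
    rw [Int.ofNat_eq_coe, zpow_natCast, r_pow]
  | negSucc m =>
    rw [zpow_negSucc, r_pow]; erw [r_inv]
    congr 1
    show -(a * ((m + 1 : ℕ) : ℤ)) = a * Int.negSucc m
    rw [Int.negSucc_eq]
    push_cast
    ring

def yD (n : ℕ) (i : Fin n) : Fin n → DihedralGroup 0 := fun k => if i = k then .r 1 else .sr 0

lemma relcheckD : ∀ r ∈ HWrels n, FreeGroup.lift (yD n) r = 1 := by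
  rintro r ⟨i, j, hij, rfl⟩
  simp only [map_mul, map_pow, map_inv, FreeGroup.lift_apply_of]
  funext k
  simp only [Pi.mul_apply, Pi.inv_apply, Pi.pow_apply, Pi.one_apply, yD]
  rcases eq_or_ne i k with rfl | hi
  · rw [if_pos rfl, if_neg (Ne.symm hij)]
    show (DihedralGroup.r 1)⁻¹ * DihedralGroup.sr 0 ^ 2 * DihedralGroup.r 1
      * DihedralGroup.sr 0 ^ 2 = 1
    rw [pow_two]
    rfl
  · rcases eq_or_ne j k with rfl | hj
    · rw [if_neg hi, if_pos rfl]
      show (DihedralGroup.sr 0)⁻¹ * DihedralGroup.r 1 ^ 2 * DihedralGroup.sr 0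
        * DihedralGroup.r 1 ^ 2 = 1
      rw [pow_two]
      rfl
    · rw [if_neg hi, if_neg hj]
      rw [pow_two]
      rfl

def phi : HW n →* (Fin n → DihedralGroup 0) := PresentedGroup.toGroup relcheckD

lemma phi_x (i : Fin n) : phi (x n i) = yD n i := PresentedGroup.toGroup.of _

def psi (k : Fin n) : HW n →* DihedralGroup 0 :=
  (Pi.evalMonoidHom (fun _ => DihedralGroup 0) k).comp phi

lemma psi_sq (k j : Fin n) :
    psi k (x n j ^ 2) = if j = k then DihedralGroup.r (2 : ℤ) else 1 := by
  have h1 : psi k (x n j ^ 2) = (yD n j k) ^ 2 := by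
    rw [map_pow]
    simp [psi, phi_x]
  rw [h1, yD]
  rcases eq_or_ne j k with rfl | h
  · rw [if_pos rfl, if_pos rfl, pow_two, DihedralGroup.r_mul_r]
    rfl
  · rw [if_neg h, if_neg h, pow_two]
    exact (DihedralGroup.sr_mul_sr 0 0).trans rfl

lemma psi_A (k : Fin n) (e : Fin n → ℤ) :
    psi k (A n e) = DihedralGroup.r (2 * e k) := by
  unfold A Al
  rw [map_list_prod, List.map_map,
    prod_map_single (List.finRange n) (List.nodup_finRange n) (List.mem_finRange k) _
      (fun j hj => ?_)]
  · show psi k ((x n k ^ 2) ^ e k) = _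
    rw [map_zpow, psi_sq, if_pos rfl, r_zpow]; rfl
  · show psi k ((x n j ^ 2) ^ e j) = 1
    rw [map_zpow, psi_sq, if_neg hj, one_zpow]


lemma Tf_one : Tf (1 : MM n) = (1 : Monoid.End (HW n)) := by
  show (Tf (1 : MM n) : HW n →* HW n) = ((1 : Monoid.End (HW n)) : HW n →* HW n)
  refine PresentedGroup.ext fun i => ?_
  show Tf (1 : MM n) (x n i) = x n i
  erw [Tf_x, show ((1 : MM n) i) = (0 : Fin n → ℤ) from rfl, A_zero, mul_one]

lemma Tf_mul (𝔞 𝔟 : MM n) : Tf (𝔞 * 𝔟) = Tf 𝔞 * Tf 𝔟 := by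
  show (Tf (𝔞 * 𝔟) : HW n →* HW n) = ((Tf 𝔞 * Tf 𝔟 : Monoid.End (HW n)) : HW n →* HW n)
  refine PresentedGroup.ext fun i => ?_
  show Tf (𝔞 * 𝔟) (x n i) = Tf 𝔞 (Tf 𝔟 (x n i))
  erw [Tf_x, Tf_x, map_mul, Tf_x, Tf_A, mul_assoc, A_add]
  exact congrArg (fun z => x n i * z) (A_congr fun k => rfl)

def T (n : ℕ) : MM n →* Monoid.End (HW n) :=
  { toFun := Tf, map_one' := Tf_one, map_mul' := Tf_mul }

lemma T_x (𝔞 : MM n) (i : Fin n) : T n 𝔞 (x n i) = x n i * A n (𝔞 i) := Tf_x 𝔞 i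

lemma T_inj : Function.Injective (T n) := by
  intro 𝔞 𝔟 h
  apply MM.ext
  intro i k
  have h1 : Tf 𝔞 (x n i) = Tf 𝔟 (x n i) := by
    rw [show Tf 𝔞 = Tf 𝔟 from h]
  erw [Tf_x, Tf_x] at h1
  have h2 : A n (𝔞 i) = A n (𝔟 i) := mul_left_cancel h1
  have h3 := congrArg (psi k) h2
  rw [psi_A, psi_A] at h3
  injection h3 with h4
  have h5 : (2 * 𝔞 i k : ℤ) = 2 * 𝔟 i k := h4
  omega

end HWaux

/-- `(M_n(ℤ), *)` is a monoid with identity the zero matrix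
(witnessed above by the `Monoid (MM n)` instance whose identity has all entries `0`,
and restated explicitly below), and `𝔞 ↦ t_𝔞` is an injective monoid homomorphism
into the endomorphism monoid of `G_n`. -/
theorem stmt3 (n : ℕ) :
    (∀ 𝔞 𝔟 𝔠 : MM n, 𝔞 * 𝔟 * 𝔠 = 𝔞 * (𝔟 * 𝔠)) ∧
    (∀ 𝔞 𝔟 : MM n, ∀ i j, (𝔞 * 𝔟) i j = 𝔞 i j + (1 + 2 * 𝔞 j j) * 𝔟 i j) ∧
    (∀ i j, (1 : MM n) i j = 0) ∧
    (∀ 𝔞 : MM n, 1 * 𝔞 = 𝔞 ∧ 𝔞 * 1 = 𝔞) ∧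
    ∃ t : MM n →* Monoid.End (HW n),
      (∀ (𝔞 : MM n) (i : Fin n), t 𝔞 (x n i) = x n i * aElt n 𝔞 i) ∧
      Function.Injective t := by
  refine ⟨fun a b c => mul_assoc a b c, fun a b i j => rfl, fun i j => rfl,
    fun a => ⟨one_mul a, mul_one a⟩, HWaux.T n, fun 𝔞 i => HWaux.Tf_x 𝔞 i, HWaux.T_inj⟩
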